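/- (Committee monotonicity of Majority Judgment) There exists an increasing chain of committees W_1 ⊂ W_2 ⊂ … ⊂ W_{|A|} with |W_l| = l for each l, such that each W_l maximizes the Majority Judgment total score Σ_{i∈K} f_judge(μ^i, W) among all size-l subsets of A. Equivalently, ties in the Majority Judgment rule can always be broken so as to preserve committee monotonicity. -/
import Mathlib


open Finset

/-- Majority Judgment committee scoring function: `Σ_{a ∈ W} μ(a)`. -/
noncomputable def fJudge {A : Type*} (μ : A → ℝ) (W : Finset A) : ℝ :=
  ∑ a ∈ W, μ a

/-- Greedy chain: at each step insert a maximizer of `s` among remaining candidates. -/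
noncomputable def mjChain {A : Type*} [Fintype A] [DecidableEq A] (s : A → ℝ) : ℕ → Finset A
  | 0 => ∅
  | n + 1 =>
      let W := mjChain s n
      if h : Wᶜ.Nonempty then insert (Wᶜ.exists_max_image s h).choose W else W

lemma mjChain_spec {A : Type*} [Fintype A] [DecidableEq A] (s : A → ℝ) :
    ∀ l, l ≤ Fintype.card A →
      (mjChain s l).card = l ∧
      ∀ W' : Finset A, W'.card = l → ∑ a ∈ W', s a ≤ ∑ a ∈ mjChain s l, s a := by
  intro l
  induction l with
  | zero =>
    intro _
    refine ⟨rfl, fun W' hW' => ?_⟩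
    rw [Finset.card_eq_zero.mp hW']
    simp [mjChain]
  | succ n ih =>
    intro hle
    obtain ⟨hcard, hopt⟩ := ih (Nat.le_of_succ_le hle)
    set W := mjChain s n with hW
    have hne : Wᶜ.Nonempty := by
      rw [← Finset.card_pos, Finset.card_compl, hcard]
      omega
    have hdef : mjChain s (n + 1) = insert (Wᶜ.exists_max_image s hne).choose W := by
      show (if h : Wᶜ.Nonempty then insert (Wᶜ.exists_max_image s h).choose W else W) = _
      rw [dif_pos hne]
    obtain ⟨ha, hamax⟩ := (Wᶜ.exists_max_image s hne).choose_spec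
    set a := (Wᶜ.exists_max_image s hne).choose
    have haW : a ∉ W := Finset.mem_compl.mp ha
    constructor
    · rw [hdef, Finset.card_insert_of_notMem haW, hcard]
    · intro W' hW'
      have hnsub : ¬ W' ⊆ W := fun h => by
        have := Finset.card_le_card h
        omega
      obtain ⟨b, hbW', hbW⟩ := Finset.not_subset.mp hnsub
      have hb : s b ≤ s a := hamax b (Finset.mem_compl.mpr hbW)
      have herase : (W'.erase b).card = n := by
        rw [Finset.card_erase_of_mem hbW', hW']
        omega
      have h1 : ∑ a ∈ W'.erase b, s a ≤ ∑ a ∈ W, s a := hopt _ herase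
      have h2 : ∑ x ∈ W', s x = s b + ∑ x ∈ W'.erase b, s x :=
        (Finset.add_sum_erase _ _ hbW').symm
      rw [hdef, Finset.sum_insert haW, h2]
      linarith

/-- Committee monotonicity of Majority Judgment: there is an increasing chain of
committees `W_1 ⊂ W_2 ⊂ … ⊂ W_{|A|}` with `|W_l| = l`, each of which maximizes the
Majority Judgment total score among size-`l` subsets of `A`. -/
theorem judge_committee_monotone
    {K A : Type*} [Fintype K] [Nonempty K] [Fintype A] [Nonempty A]
    (μ : K → A → ℝ) :
    ∃ W : ℕ → Finset A,
      (∀ l, 1 ≤ l → l ≤ Fintype.card A →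
        (W l).card = l ∧
        ∀ W' : Finset A, W'.card = l →
          ∑ i : K, fJudge (μ i) W' ≤ ∑ i : K, fJudge (μ i) (W l)) ∧
      (∀ l, 1 ≤ l → l < Fintype.card A → W l ⊂ W (l + 1)) := by
  classical
  set s : A → ℝ := fun a => ∑ i : K, μ i a with hs
  have hswap : ∀ W' : Finset A, ∑ i : K, fJudge (μ i) W' = ∑ a ∈ W', s a := by
    intro W'
    simp only [fJudge, hs]
    exact Finset.sum_comm
  refine ⟨mjChain s, fun l _ hle => ?_, fun l _ hlt => ?_⟩
  · obtain ⟨hc, ho⟩ := mjChain_spec s l hle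
    exact ⟨hc, fun W' hW' => by rw [hswap, hswap]; exact ho W' hW'⟩
  · obtain ⟨hc, _⟩ := mjChain_spec s l (le_of_lt hlt)
    have hne : (mjChain s l)ᶜ.Nonempty := by
      rw [← Finset.card_pos, Finset.card_compl, hc]
      omega
    have hdef : mjChain s (l + 1) =
        insert ((mjChain s l)ᶜ.exists_max_image s hne).choose (mjChain s l) := by
      show (if h : (mjChain s l)ᶜ.Nonempty then
        insert ((mjChain s l)ᶜ.exists_max_image s h).choose (mjChain s l)
        else mjChain s l) = _
      rw [dif_pos hne]
    rw [hdef]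
    exact Finset.ssubset_insert (Finset.mem_compl.mp
      ((mjChain s l)ᶜ.exists_max_image s hne).choose_spec.1)
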